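/- In dimension d = 2 with a = (1,1), Q = [[c,-c],[-c,c]] with c > 0 and l = (l_1,l_2) with l_1 + l_2 = -α < 0, the Hüsler-Reiss Pareto normalizing constant equals C(Q,l) = (√(2π)/(α√c)) [ e^{l_1²/(2c)} Φ(-l_1/√c) + e^{l_2²/(2c)} Φ(-l_2/√c) ], where Φ is the standard normal cdf. -/

import Mathlib

open MeasureTheory

/-- Standard normal cumulative distribution function. -/
noncomputable def stdNormalCDF (x : ℝ) : ℝ :=
  ∫ t in Set.Iic x, (Real.sqrt (2 * Real.pi))⁻¹ * Real.exp (-t ^ 2 / 2)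

open Set Real

lemma sqrt_two_pi_pos : 0 < Real.sqrt (2 * Real.pi) :=
  Real.sqrt_pos.mpr (by positivity)

lemma gauss_tail (a : ℝ) :
    ∫ t in Set.Ioi a, Real.exp (-t ^ 2 / 2) = Real.sqrt (2 * Real.pi) * stdNormalCDF (-a) := by
  have h1 : (∫ t in Set.Ioi a, Real.exp (-t ^ 2 / 2))
      = ∫ t in Set.Iic (-a), Real.exp (-t ^ 2 / 2) := by
    rw [← integral_comp_neg_Ioi]
    congr 1; ext t; rw [neg_pow]; ring_nf
  rw [h1, stdNormalCDF, integral_const_mul, ← mul_assoc,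
    mul_inv_cancel₀ sqrt_two_pi_pos.ne', one_mul]

section G

lemma sq_complete {c : ℝ} (hc : 0 < c) (m u : ℝ) :
    -(c/2)*u^2 - m*u = m^2/(2*c) + (-(Real.sqrt c * u + m / Real.sqrt c)^2/2) := by
  have hs0 : Real.sqrt c ≠ 0 := ne_of_gt (Real.sqrt_pos.mpr hc)
  have hss : Real.sqrt c * Real.sqrt c = c := Real.mul_self_sqrt hc.le
  have h1 : Real.sqrt c * u + m / Real.sqrt c = (c * u + m) / Real.sqrt c := by
    field_simp
    linear_combination u * hss
  rw [h1, div_pow, Real.sq_sqrt hc.le]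
  field_simp
  ring

lemma G_integrable_full {c : ℝ} (hc : 0 < c) (m : ℝ) :
    Integrable (fun u : ℝ => Real.exp (-(c/2)*u^2 - m*u)) := by
  have hs0 : Real.sqrt c ≠ 0 := ne_of_gt (Real.sqrt_pos.mpr hc)
  have h0 : Integrable (fun x : ℝ => Real.exp (-(1/2 : ℝ)*x^2)) :=
    integrable_exp_neg_mul_sq (by norm_num)
  have h1 : Integrable (fun x : ℝ => Real.exp (-(1/2 : ℝ)*(x + m / Real.sqrt c)^2)) :=
    h0.comp_add_right _
  have h2 : Integrable (fun u : ℝ =>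
      Real.exp (-(1/2 : ℝ)*(Real.sqrt c * u + m / Real.sqrt c)^2)) :=
    h1.comp_mul_left' hs0
  have h3 := h2.const_mul (Real.exp (m^2/(2*c)))
  refine h3.congr (Filter.Eventually.of_forall fun u => ?_)
  dsimp only
  rw [← Real.exp_add]
  congr 1
  rw [sq_complete hc m u]
  ring

lemma G_integrable {c : ℝ} (hc : 0 < c) (m : ℝ) :
    IntegrableOn (fun u : ℝ => Real.exp (-(c/2)*u^2 - m*u)) (Set.Ioi 0) :=
  (G_integrable_full hc m).integrableOn

lemma G_eval {c : ℝ} (hc : 0 < c) (m : ℝ) :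
    (∫ u in Set.Ioi (0:ℝ), Real.exp (-(c/2)*u^2 - m*u))
    = Real.exp (m^2/(2*c)) * (Real.sqrt (2*Real.pi) / Real.sqrt c) *
      stdNormalCDF (-m / Real.sqrt c) := by
  have hsp : 0 < Real.sqrt c := Real.sqrt_pos.mpr hc
  have hs0 : Real.sqrt c ≠ 0 := hsp.ne'
  set b := m / Real.sqrt c with hb
  have e1 : (∫ u in Set.Ioi (0:ℝ), Real.exp (-(c/2)*u^2 - m*u))
      = Real.exp (m^2/(2*c)) *
        ∫ u in Set.Ioi (0:ℝ), Real.exp (-(Real.sqrt c * u + b)^2/2) := by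
    rw [← integral_const_mul]
    refine setIntegral_congr_fun measurableSet_Ioi fun u _ => ?_
    rw [← Real.exp_add, sq_complete hc m u]
  have himg : (fun t : ℝ => Real.sqrt c * t + b) '' Set.Ioi 0 = Set.Ioi b := by
    ext x
    constructor
    · rintro ⟨t, ht, rfl⟩
      have ht' : (0:ℝ) < t := ht
      have : 0 < Real.sqrt c * t := by positivity
      simp only [Set.mem_Ioi]; linarith
    · intro hx
      have hx' : b < x := hx
      refine ⟨(x - b) / Real.sqrt c, ?_, by field_simp; ring⟩
      have : 0 < x - b := by linarith
      exact div_pos this hsp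
  have e2 : (∫ x in Set.Ioi b, Real.exp (-x^2/2))
      = ∫ t in Set.Ioi (0:ℝ), |Real.sqrt c| • Real.exp (-(Real.sqrt c * t + b)^2/2) := by
    rw [← himg]
    refine integral_image_eq_integral_abs_deriv_smul measurableSet_Ioi
      (fun x _ => ?_) (fun x _ y _ h => ?_) _
    · simpa using (((hasDerivAt_id x).const_mul (Real.sqrt c)).add_const b).hasDerivWithinAt
    · exact mul_left_cancel₀ hs0 (by linarith [add_right_cancel h])
  have e3 : (∫ t in Set.Ioi (0:ℝ), Real.exp (-(Real.sqrt c * t + b)^2/2))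
      = (Real.sqrt c)⁻¹ * ∫ x in Set.Ioi b, Real.exp (-x^2/2) := by
    rw [e2]
    simp only [smul_eq_mul, abs_of_pos hsp, integral_const_mul]
    rw [← mul_assoc, inv_mul_cancel₀ hs0, one_mul]
  have e4 : (∫ x in Set.Ioi b, Real.exp (-x^2/2))
      = Real.sqrt (2*Real.pi) * stdNormalCDF (-b) := gauss_tail b
  rw [e1, e3, e4, hb]
  ring

lemma exp_image {x : ℝ} (hx : 0 < x) :
    (fun u : ℝ => x * Real.exp (-u)) '' Set.Ioi 0 = Set.Ioo 0 x := by
  ext y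
  constructor
  · rintro ⟨u, hu, rfl⟩
    have hu' : (0:ℝ) < u := hu
    constructor
    · positivity
    · have h1 : Real.exp (-u) < 1 := by
        rw [Real.exp_lt_one_iff]; linarith
      calc x * Real.exp (-u) < x * 1 := by
            exact mul_lt_mul_of_pos_left h1 hx
        _ = x := mul_one x
  · rintro ⟨hy0, hyx⟩
    refine ⟨Real.log (x / y), ?_, ?_⟩
    · have : 1 < x / y := (one_lt_div hy0).mpr hyx
      exact Real.log_pos this
    · show x * Real.exp (-Real.log (x / y)) = y
      rw [← Real.log_inv, Real.exp_log (by positivity)]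
      field_simp

lemma exp_deriv {x : ℝ} (u : ℝ) (s : Set ℝ) :
    HasDerivWithinAt (fun u : ℝ => x * Real.exp (-u)) (-(x * Real.exp (-u))) s u := by
  have h := ((Real.hasDerivAt_exp (-u)).comp u ((hasDerivAt_id u).neg)).const_mul x
  simpa using h.hasDerivWithinAt

lemma exp_inj {x : ℝ} (hx : 0 < x) : Set.InjOn (fun u : ℝ => x * Real.exp (-u)) (Set.Ioi 0) := by
  intro u _ v _ h
  have := mul_left_cancel₀ hx.ne' h
  have := Real.exp_injective this
  linarith

lemma subst_pointwise {c : ℝ} (a b x u : ℝ) (hx : 0 < x) :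
    |(-(x * Real.exp (-u)))| • (Real.exp (-(c/2)*(Real.log x - Real.log (x * Real.exp (-u)))^2
        + a * Real.log x + b * Real.log (x * Real.exp (-u))) * (x * (x * Real.exp (-u)))⁻¹)
    = Real.exp ((a+b-1) * Real.log x) * Real.exp (-(c/2)*u^2 - b*u) := by
  rw [Real.log_mul hx.ne' (Real.exp_ne_zero _), Real.log_exp]
  rw [abs_neg, abs_of_pos (by positivity)]
  set L := Real.log x with hL
  rw [show x = Real.exp L from (Real.exp_log hx).symm]
  simp only [smul_eq_mul, ← Real.exp_add, mul_inv, ← Real.exp_neg]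
  rw [Real.exp_eq_exp]
  ring

noncomputable def Fab (c a b : ℝ) (p : ℝ × ℝ) : ℝ :=
  Real.exp (-(c/2) * (Real.log p.1 - Real.log p.2) ^ 2 + a * Real.log p.1 + b * Real.log p.2)
    * (p.1 * p.2)⁻¹

lemma Fab_meas {c a b : ℝ} : Measurable (Fab c a b) := by
  unfold Fab
  measurability

lemma inner_eval {c : ℝ} (hc : 0 < c) (a b : ℝ) {x : ℝ} (hx : 0 < x) :
    (∫ y in Set.Ioo 0 x, Fab c a b (x, y))
    = Real.exp ((a+b-1) * Real.log x) * ∫ u in Set.Ioi (0:ℝ), Real.exp (-(c/2)*u^2 - b*u) := by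
  rw [← exp_image hx,
    integral_image_eq_integral_abs_deriv_smul measurableSet_Ioi
      (fun u _ => exp_deriv u _) (exp_inj hx), ← integral_const_mul]
  exact setIntegral_congr_fun measurableSet_Ioi fun u _ => subst_pointwise a b x u hx

lemma inner_integrableOn {c : ℝ} (hc : 0 < c) (a b : ℝ) {x : ℝ} (hx : 0 < x) :
    IntegrableOn (fun y => Fab c a b (x, y)) (Set.Ioo 0 x) := by
  rw [← exp_image hx,
    integrableOn_image_iff_integrableOn_abs_deriv_smul measurableSet_Ioi
      (fun u _ => exp_deriv u _) (exp_inj hx)]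
  exact MeasureTheory.IntegrableOn.congr_fun
    ((G_integrable hc b).const_mul (Real.exp ((a+b-1) * Real.log x)))
    (fun u _ => (subst_pointwise a b x u hx).symm) measurableSet_Ioi

lemma integral_T1 {c a b α : ℝ} (hc : 0 < c) (hα : 0 < α) (hab : a + b = -α) :
    IntegrableOn (Fab c a b) {p : ℝ × ℝ | 1 < p.1 ∧ 0 < p.2 ∧ p.2 < p.1} ∧
    (∫ p in {p : ℝ × ℝ | 1 < p.1 ∧ 0 < p.2 ∧ p.2 < p.1}, Fab c a b p)
      = (∫ u in Set.Ioi (0:ℝ), Real.exp (-(c/2)*u^2 - b*u)) / α := by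
  set T : Set (ℝ × ℝ) := {p : ℝ × ℝ | 1 < p.1 ∧ 0 < p.2 ∧ p.2 < p.1} with hTdef
  have hT : MeasurableSet T :=
    (measurableSet_lt measurable_const measurable_fst).inter
      ((measurableSet_lt measurable_const measurable_snd).inter
        (measurableSet_lt measurable_snd measurable_fst))
  set K := ∫ u in Set.Ioi (0:ℝ), Real.exp (-(c/2)*u^2 - b*u) with hK
  have hsl : ∀ x : ℝ, 1 < x → ∀ y,
      T.indicator (Fab c a b) (x, y) = (Set.Ioo 0 x).indicator (fun y => Fab c a b (x, y)) y := by
    intro x hx y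
    by_cases hy : y ∈ Set.Ioo 0 x
    · rw [Set.indicator_of_mem hy, Set.indicator_of_mem (show (x,y) ∈ T from ⟨hx, hy.1, hy.2⟩)]
    · rw [Set.indicator_of_notMem hy,
        Set.indicator_of_notMem (fun hmem => hy ⟨hmem.2.1, hmem.2.2⟩)]
  have hsl' : ∀ x : ℝ, ¬ 1 < x → ∀ y, T.indicator (Fab c a b) (x, y) = 0 := by
    intro x hx y
    exact Set.indicator_of_notMem (fun hmem => hx hmem.1) _
  have hinner_int : ∀ x : ℝ, Integrable (fun y => T.indicator (Fab c a b) (x,y)) := by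
    intro x
    by_cases hx : 1 < x
    · have hx0 : (0:ℝ) < x := lt_trans one_pos hx
      simp only [hsl x hx]
      rw [integrable_indicator_iff measurableSet_Ioo]
      exact inner_integrableOn hc a b hx0
    · simp only [hsl' x hx]
      exact integrable_zero _ _ _
  have hinner_val : ∀ x : ℝ, (∫ y, T.indicator (Fab c a b) (x,y))
      = (Set.Ioi 1).indicator (fun x => Real.exp ((a+b-1) * Real.log x) * K) x := by
    intro x
    by_cases hx : 1 < x
    · simp only [hsl x hx]
      rw [integral_indicator measurableSet_Ioo,
        Set.indicator_of_mem (show x ∈ Set.Ioi 1 from hx)]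
      exact inner_eval hc a b (lt_trans one_pos hx)
    · simp only [hsl' x hx]
      rw [Set.indicator_of_notMem (show x ∉ Set.Ioi 1 from hx)]
      simp
  have houter_int : Integrable ((Set.Ioi 1).indicator
      (fun x => Real.exp ((a+b-1) * Real.log x) * K)) := by
    rw [integrable_indicator_iff measurableSet_Ioi]
    have h1 : IntegrableOn (fun x : ℝ => x ^ (a+b-1) * K) (Set.Ioi 1) :=
      (integrableOn_Ioi_rpow_of_lt (by rw [hab]; linarith) one_pos).mul_const K
    refine h1.congr_fun (fun x hx => ?_) measurableSet_Ioi
    dsimp only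
    rw [Real.rpow_def_of_pos (lt_trans one_pos hx), mul_comm (Real.log x)]
  have hnonneg : ∀ p : ℝ × ℝ, 0 ≤ T.indicator (Fab c a b) p := by
    intro p
    refine Set.indicator_nonneg (fun q hq => ?_) p
    have h1 : (0:ℝ) < q.1 := lt_trans one_pos hq.1
    have h2 : (0:ℝ) < q.2 := hq.2.1
    unfold Fab
    positivity
  have hind_m : Measurable (T.indicator (Fab c a b)) := Fab_meas.indicator hT
  have hInt : Integrable (T.indicator (Fab c a b))
      ((volume : Measure ℝ).prod (volume : Measure ℝ)) := by
    refine (integrable_prod_iff hind_m.aestronglyMeasurable).mpr ⟨?_, ?_⟩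
    · exact Filter.Eventually.of_forall hinner_int
    · refine houter_int.congr (Filter.Eventually.of_forall fun x => ?_)
      dsimp only
      rw [← hinner_val x]
      exact (integral_congr_ae (Filter.Eventually.of_forall fun y =>
        Real.norm_of_nonneg (hnonneg (x, y)))).symm
  have hInt' : Integrable (T.indicator (Fab c a b)) (volume : Measure (ℝ × ℝ)) := by
    rw [Measure.volume_eq_prod]; exact hInt
  have hIntOn : IntegrableOn (Fab c a b) T := (integrable_indicator_iff hT).mp hInt'
  refine ⟨hIntOn, ?_⟩
  rw [← integral_indicator hT]
  have hstep : (∫ p, T.indicator (Fab c a b) p)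
      = ∫ x, ∫ y, T.indicator (Fab c a b) (x, y) := by
    rw [Measure.volume_eq_prod, integral_prod _ hInt]
  rw [hstep, integral_congr_ae (Filter.Eventually.of_forall hinner_val),
    integral_indicator measurableSet_Ioi]
  have hstep2 : (∫ x in Set.Ioi (1:ℝ), Real.exp ((a+b-1) * Real.log x) * K)
      = ∫ x in Set.Ioi (1:ℝ), x ^ (a+b-1) * K :=
    setIntegral_congr_fun measurableSet_Ioi (fun x hx => by
      rw [Real.rpow_def_of_pos (lt_trans one_pos hx), mul_comm (Real.log x)])
  rw [hstep2, integral_mul_const, integral_Ioi_rpow_of_lt (by rw [hab]; linarith) one_pos]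
  rw [hab]
  rw [show -α - 1 + 1 = -α by ring, Real.one_rpow]
  field_simp

lemma diag_null : (volume : Measure (ℝ × ℝ)) {p : ℝ × ℝ | p.2 = p.1} = 0 := by
  rw [Measure.volume_eq_prod]
  rw [Measure.measure_prod_null (measurableSet_eq_fun measurable_snd measurable_fst)]
  refine Filter.Eventually.of_forall fun x => ?_
  have : (Prod.mk x ⁻¹' {p : ℝ × ℝ | p.2 = p.1}) = {x} := by
    ext y; simp [eq_comm]
  simp [this]

lemma T2_ae_T1 : {p : ℝ × ℝ | 1 < p.1 ∧ 0 < p.2 ∧ p.2 ≤ p.1}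
    =ᵐ[(volume : Measure (ℝ × ℝ))] {p : ℝ × ℝ | 1 < p.1 ∧ 0 < p.2 ∧ p.2 < p.1} := by
  rw [MeasureTheory.ae_eq_set]
  constructor
  · refine measure_mono_null (fun p hp => ?_) diag_null
    obtain ⟨⟨h1, h2, h3⟩, h4⟩ := hp
    have : ¬ p.2 < p.1 := fun hlt => h4 ⟨h1, h2, hlt⟩
    exact le_antisymm h3 (not_lt.mp this)
  · have : {p : ℝ × ℝ | 1 < p.1 ∧ 0 < p.2 ∧ p.2 < p.1} \
        {p : ℝ × ℝ | 1 < p.1 ∧ 0 < p.2 ∧ p.2 ≤ p.1} = ∅ := by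
      ext p; simp only [Set.mem_diff, Set.mem_setOf_eq, Set.mem_empty_iff_false, iff_false]
      rintro ⟨⟨h1, h2, h3⟩, h4⟩
      exact h4 ⟨h1, h2, h3.le⟩
    rw [this]; exact measure_empty

lemma integral_T2 {c a b α : ℝ} (hc : 0 < c) (hα : 0 < α) (hab : a + b = -α) :
    IntegrableOn (Fab c a b) {p : ℝ × ℝ | 1 < p.1 ∧ 0 < p.2 ∧ p.2 ≤ p.1} ∧
    (∫ p in {p : ℝ × ℝ | 1 < p.1 ∧ 0 < p.2 ∧ p.2 ≤ p.1}, Fab c a b p)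
      = (∫ u in Set.Ioi (0:ℝ), Real.exp (-(c/2)*u^2 - b*u)) / α := by
  obtain ⟨h1, h2⟩ := integral_T1 (α := α) hc hα hab
  constructor
  · unfold IntegrableOn
    rw [Measure.restrict_congr_set T2_ae_T1]
    exact h1
  · rw [setIntegral_congr_set T2_ae_T1]
    exact h2

lemma Fab_swap (c a b : ℝ) (p : ℝ × ℝ) : Fab c a b p.swap = Fab c b a p := by
  unfold Fab
  simp only [Prod.fst_swap, Prod.snd_swap]
  rw [mul_comm p.2 p.1]
  congr 1
  ring

lemma swap_pres : MeasurePreserving (Prod.swap : ℝ × ℝ → ℝ × ℝ) volume volume := by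
  rw [Measure.volume_eq_prod]
  exact Measure.measurePreserving_swap

lemma swap_pre_B2 : (Prod.swap : ℝ × ℝ → ℝ × ℝ) ⁻¹' {p : ℝ × ℝ | 0 < p.1 ∧ 1 < p.2 ∧ p.1 < p.2}
    = {p : ℝ × ℝ | 1 < p.1 ∧ 0 < p.2 ∧ p.2 < p.1} := by
  ext p
  simp only [Set.mem_preimage, Set.mem_setOf_eq, Prod.fst_swap, Prod.snd_swap]
  tauto

lemma integral_B2 {c a b α : ℝ} (hc : 0 < c) (hα : 0 < α) (hab : a + b = -α) :
    IntegrableOn (Fab c a b) {p : ℝ × ℝ | 0 < p.1 ∧ 1 < p.2 ∧ p.1 < p.2} ∧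
    (∫ p in {p : ℝ × ℝ | 0 < p.1 ∧ 1 < p.2 ∧ p.1 < p.2}, Fab c a b p)
      = (∫ u in Set.Ioi (0:ℝ), Real.exp (-(c/2)*u^2 - a*u)) / α := by
  have hab' : b + a = -α := by linarith
  obtain ⟨h1, h2⟩ := integral_T1 (a := b) (b := a) (α := α) hc hα hab'
  have hemb : MeasurableEmbedding (Prod.swap : ℝ × ℝ → ℝ × ℝ) :=
    MeasurableEquiv.prodComm.measurableEmbedding
  have hcomp : (Fab c a b) ∘ (Prod.swap : ℝ × ℝ → ℝ × ℝ) = Fab c b a := by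
    funext p; exact Fab_swap c a b p
  constructor
  · have := (swap_pres.integrableOn_comp_preimage hemb
      (f := Fab c a b) (s := {p : ℝ × ℝ | 0 < p.1 ∧ 1 < p.2 ∧ p.1 < p.2})).symm
    rw [this, swap_pre_B2, hcomp]
    exact h1
  · rw [← swap_pres.setIntegral_preimage_emb hemb (Fab c a b)
      {p : ℝ × ℝ | 0 < p.1 ∧ 1 < p.2 ∧ p.1 < p.2}, swap_pre_B2]
    calc (∫ p in {p : ℝ × ℝ | 1 < p.1 ∧ 0 < p.2 ∧ p.2 < p.1}, Fab c a b p.swap)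
        = ∫ p in {p : ℝ × ℝ | 1 < p.1 ∧ 0 < p.2 ∧ p.2 < p.1}, Fab c b a p := by
          refine setIntegral_congr_fun ?_ fun p _ => Fab_swap c a b p
          exact (measurableSet_lt measurable_const measurable_fst).inter
            ((measurableSet_lt measurable_const measurable_snd).inter
              (measurableSet_lt measurable_snd measurable_fst))
      _ = (∫ u in Set.Ioi (0:ℝ), Real.exp (-(c/2)*u^2 - a*u)) / α := h2


/-- Bivariate Hüsler-Reiss Pareto normalizing constant, `d = 2`, `a = (1,1)`:
`C(Q,l) = (√(2π)/(α√c)) [e^{l₁²/(2c)} Φ(-l₁/√c) + e^{l₂²/(2c)} Φ(-l₂/√c)]`. -/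
theorem hr_pareto_normalizing_constant_dim2
    (c l₁ l₂ α : ℝ) (hc : 0 < c) (hα : 0 < α) (hl : l₁ + l₂ = -α) :
    (∫ z in {z : Fin 2 → ℝ | (∀ i, 0 < z i) ∧ (1 < z 0 ∨ 1 < z 1)},
        Real.exp (-(c / 2) * (Real.log (z 0) - Real.log (z 1)) ^ 2 +
            l₁ * Real.log (z 0) + l₂ * Real.log (z 1)) * (z 0 * z 1)⁻¹) =
      Real.sqrt (2 * Real.pi) / (α * Real.sqrt c) *
        (Real.exp (l₁ ^ 2 / (2 * c)) * stdNormalCDF (-l₁ / Real.sqrt c) +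
          Real.exp (l₂ ^ 2 / (2 * c)) * stdNormalCDF (-l₂ / Real.sqrt c)) := by
  set S : Set (ℝ × ℝ) := {p : ℝ × ℝ | (0 < p.1 ∧ 0 < p.2) ∧ (1 < p.1 ∨ 1 < p.2)} with hS
  have hset : {z : Fin 2 → ℝ | (∀ i, 0 < z i) ∧ (1 < z 0 ∨ 1 < z 1)}
      = (MeasurableEquiv.finTwoArrow : (Fin 2 → ℝ) ≃ᵐ ℝ × ℝ) ⁻¹' S := by
    ext z
    simp only [Set.mem_setOf_eq, Set.mem_preimage, hS, MeasurableEquiv.finTwoArrow,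
      Fin.forall_fin_two]
    rfl
  have htrans := (volume_preserving_finTwoArrow ℝ).setIntegral_preimage_emb
    (MeasurableEquiv.measurableEmbedding _) (Fab c l₁ l₂) S
  have hLHS : (∫ z in {z : Fin 2 → ℝ | (∀ i, 0 < z i) ∧ (1 < z 0 ∨ 1 < z 1)},
        Real.exp (-(c / 2) * (Real.log (z 0) - Real.log (z 1)) ^ 2 +
            l₁ * Real.log (z 0) + l₂ * Real.log (z 1)) * (z 0 * z 1)⁻¹)
      = ∫ p in S, Fab c l₁ l₂ p := by
    rw [hset, ← htrans]
    rfl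
  rw [hLHS]
  -- split S
  set B₁ : Set (ℝ × ℝ) := {p : ℝ × ℝ | 1 < p.1 ∧ 0 < p.2 ∧ p.2 ≤ p.1} with hB₁
  set B₂ : Set (ℝ × ℝ) := {p : ℝ × ℝ | 0 < p.1 ∧ 1 < p.2 ∧ p.1 < p.2} with hB₂
  have hsplit : S = B₁ ∪ B₂ := by
    ext p
    simp only [hS, hB₁, hB₂, Set.mem_setOf_eq, Set.mem_union]
    constructor
    · rintro ⟨⟨h1, h2⟩, h3⟩
      rcases le_or_gt p.2 p.1 with h | h
      · left
        refine ⟨?_, h2, h⟩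
        rcases h3 with h3 | h3
        · exact h3
        · linarith
      · right
        refine ⟨h1, ?_, h⟩
        rcases h3 with h3 | h3
        · linarith
        · exact h3
    · rintro (⟨h1, h2, h3⟩ | ⟨h1, h2, h3⟩)
      · exact ⟨⟨lt_trans one_pos h1, h2⟩, Or.inl h1⟩
      · exact ⟨⟨h1, lt_trans one_pos h2⟩, Or.inr h2⟩
  have hdisj : Disjoint B₁ B₂ := by
    rw [Set.disjoint_left]
    rintro p ⟨_, _, h3⟩ ⟨_, _, h3'⟩
    linarith
  have hB₂m : MeasurableSet B₂ :=
    (measurableSet_lt measurable_const measurable_fst).inter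
      ((measurableSet_lt measurable_const measurable_snd).inter
        (measurableSet_lt measurable_fst measurable_snd))
  obtain ⟨hi1, he1⟩ := integral_T2 (a := l₁) (b := l₂) (α := α) hc hα hl
  obtain ⟨hi2, he2⟩ := integral_B2 (a := l₁) (b := l₂) (α := α) hc hα hl
  rw [hsplit, setIntegral_union hdisj hB₂m hi1 hi2, he1, he2,
    G_eval hc l₂, G_eval hc l₁]
  have hs0 : Real.sqrt c ≠ 0 := ne_of_gt (Real.sqrt_pos.mpr hc)
  field_simp
  ring
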